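/- Let A and B be finite sets, E a set of edges of the complete bipartite graph on A ⊔ B, Q ⊆ E, and P any set of edges of the complete bipartite graph on A ⊔ B. Then the following are equivalent: (1) for every connected component D of (A, B, Q), all vertices of D lie in a single connected component of (A, B, (E − Q) ∪ P); (2) for every connected component D of (A, B, E), all vertices of D lie in a single connected component of (A, B, (E − Q) ∪ P). -/

import Mathlib

variable {R C : Type*}

/-- Direction-blind adjacency in the bipartite graph on `R ⊕ C` via an edge in `S`. -/
def Adj (S : Set (R × C)) (v w : R ⊕ C) : Prop :=
  ∃ e ∈ S, (v = Sum.inl e.1 ∧ w = Sum.inr e.2) ∨ (v = Sum.inr e.2 ∧ w = Sum.inl e.1)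

/-- Connectivity in the bipartite graph on `R ⊕ C` via edges in `S`. -/
def Conn (S : Set (R × C)) : (R ⊕ C) → (R ⊕ C) → Prop :=
  Relation.ReflTransGen (Adj S)

/-- `D` is a connected component of the bipartite graph with edge set `S`. -/
def IsCC (S : Set (R × C)) (D : Set (R ⊕ C)) : Prop :=
  ∃ v, D = {w | Conn S v w}

/-- All vertices of `D` are joined by paths using edges in `S`. -/
def ConnectedOn (S : Set (R × C)) (D : Set (R ⊕ C)) : Prop :=
  ∀ v ∈ D, ∀ w ∈ D, Conn S v w

lemma adj_symm {S : Set (R × C)} : Symmetric (Adj S) := by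
  rintro v w ⟨e, he, h | h⟩
  · exact ⟨e, he, Or.inr ⟨h.2, h.1⟩⟩
  · exact ⟨e, he, Or.inl ⟨h.2, h.1⟩⟩

lemma conn_symm {S : Set (R × C)} {v w : R ⊕ C} (h : Conn S v w) : Conn S w v :=
  (@Relation.ReflTransGen.stdSymm _ _ ⟨fun _ _ hab => adj_symm hab⟩).symm _ _ h

lemma key {S T : Set (R × C)} :
    (∀ D : Set (R ⊕ C), IsCC S D → ConnectedOn T D) ↔
    (∀ v w : R ⊕ C, Conn S v w → Conn T v w) := by
  constructor
  · intro h v w hvw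
    exact h _ ⟨v, rfl⟩ v Relation.ReflTransGen.refl w hvw
  · rintro h D ⟨v, rfl⟩ a ha b hb
    exact h _ _ ((conn_symm ha).trans hb)

/-- The vertices of each connected component of `(A, B, Q)` are connected in
`(A, B, (E - Q) ∪ P)` iff the vertices of each connected component of `(A, B, E)`
are connected in `(A, B, (E - Q) ∪ P)`. -/
theorem stmt15 {A B : Type*} [Fintype A] [Fintype B]
    (E Q : Set (A × B)) (hQE : Q ⊆ E) (P : Set (A × B)) :
    (∀ D : Set (A ⊕ B), IsCC Q D → ConnectedOn ((E \ Q) ∪ P) D) ↔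
    (∀ D : Set (A ⊕ B), IsCC E D → ConnectedOn ((E \ Q) ∪ P) D) := by
  rw [key, key]
  constructor
  · intro h v w hvw
    induction hvw with
    | refl => exact Relation.ReflTransGen.refl
    | tail _ hadj ih =>
      refine ih.trans ?_
      obtain ⟨e, he, hcase⟩ := hadj
      by_cases hq : e ∈ Q
      · exact h _ _ (Relation.ReflTransGen.single ⟨e, hq, hcase⟩)
      · exact Relation.ReflTransGen.single ⟨e, Or.inl ⟨he, hq⟩, hcase⟩
  · intro h v w hvw
    refine h _ _ (Relation.ReflTransGen.mono ?_ _ _ hvw)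
    rintro a b ⟨e, he, hcase⟩
    exact ⟨e, hQE he, hcase⟩
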